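/- arXiv:2506.20498 — 7 statements merged into one kernel-verified Lean document; each statement's English description precedes it below -/
import Mathlib

section
/- For every fixed real β ≥ 0 and natural number n, as σ → ∞ one has ∫_β^σ x^n √(σ² − x²) dx = (1/2) B((n+1)/2, 3/2) σ^{n+2} − (β^{n+1}/(n+1)) σ + O(σ^{−1}), where B is the Euler Beta function. -/
open MeasureTheory Real Filter Asymptotics

/-- The Euler Beta function `B(x, y) = ∫ t in 0..1, t^(x-1) * (1-t)^(y-1)`. -/
noncomputable def eulerBeta (x y : ℝ) : ℝ :=
  ∫ t in (0:ℝ)..1, t ^ (x - 1) * (1 - t) ^ (y - 1)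

lemma sq_image_Ioo : (fun t : ℝ => t ^ 2) '' Set.Ioo 0 1 = Set.Ioo (0:ℝ) 1 := by
  ext y; constructor
  · rintro ⟨x, ⟨hx0, hx1⟩, rfl⟩
    refine ⟨by positivity, ?_⟩
    show x ^ 2 < 1
    nlinarith
  · rintro ⟨hy0, hy1⟩
    refine ⟨Real.sqrt y, ⟨Real.sqrt_pos.2 hy0, ?_⟩, Real.sq_sqrt hy0.le⟩
    nlinarith [Real.sq_sqrt hy0.le, Real.sqrt_nonneg y]

lemma beta_aux (n : ℕ) :
    eulerBeta (((n:ℝ)+1)/2) (3/2) = 2 * ∫ t in (0:ℝ)..1, t ^ n * Real.sqrt (1 - t ^ 2) := by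
  have hinj : Set.InjOn (fun t : ℝ => t ^ 2) (Set.Ioo 0 1) := by
    intro a ha b hb h
    simp only at h
    nlinarith [ha.1, hb.1]
  have h1 : eulerBeta (((n:ℝ)+1)/2) (3/2)
      = ∫ u in Set.Ioo (0:ℝ) 1, u ^ (((n:ℝ)+1)/2 - 1) * (1-u) ^ ((3:ℝ)/2 - 1) := by
    rw [eulerBeta, intervalIntegral.integral_of_le zero_le_one,
      MeasureTheory.integral_Ioc_eq_integral_Ioo]
  rw [h1, ← sq_image_Ioo,
    MeasureTheory.integral_image_eq_integral_abs_deriv_smul measurableSet_Ioo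
      (fun x _ => (hasDerivAt_pow 2 x).hasDerivWithinAt) hinj]
  rw [intervalIntegral.integral_of_le zero_le_one, MeasureTheory.integral_Ioc_eq_integral_Ioo,
    ← MeasureTheory.integral_const_mul]
  refine MeasureTheory.setIntegral_congr_fun measurableSet_Ioo (fun x hx => ?_)
  obtain ⟨hx0, hx1⟩ := hx
  have h2 : ((x:ℝ) ^ 2) ^ (((n:ℝ)+1)/2 - 1) = x ^ ((n:ℝ) - 1) := by
    rw [← Real.rpow_natCast x 2, ← Real.rpow_mul hx0.le]
    norm_num; ring_nf
  have h3 : ((1:ℝ) - x ^ 2) ^ ((3:ℝ)/2 - 1) = Real.sqrt (1 - x ^ 2) := by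
    rw [Real.sqrt_eq_rpow]; norm_num
  have h4 : x * x ^ ((n:ℝ) - 1) = x ^ n := by
    rw [← Real.rpow_natCast x n]
    nth_rewrite 1 [← Real.rpow_one x]
    rw [← Real.rpow_add hx0]
    norm_num
  simp only [smul_eq_mul, h2, h3]
  rw [abs_of_pos (by positivity : (0:ℝ) < (2:ℕ) * x ^ (2-1))]
  push_cast
  rw [pow_one]
  linear_combination (2 * Real.sqrt (1 - x ^ 2)) * h4

theorem stmt_2 (β : ℝ) (hβ : 0 ≤ β) (n : ℕ) :
    (fun σ : ℝ =>
        (∫ x in β..σ, x ^ n * Real.sqrt (σ ^ 2 - x ^ 2)) -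
          ((1 / 2) * eulerBeta (((n : ℝ) + 1) / 2) (3 / 2) * σ ^ (n + 2) -
            β ^ (n + 1) / ((n : ℝ) + 1) * σ))
      =O[atTop] fun σ : ℝ => σ⁻¹ := by
  rw [Asymptotics.isBigO_iff]
  refine ⟨β ^ (n + 3), ?_⟩
  filter_upwards [eventually_ge_atTop (max β 1)] with σ hσ
  have hσβ : β ≤ σ := le_trans (le_max_left _ _) hσ
  have hσ1 : (1:ℝ) ≤ σ := le_trans (le_max_right _ _) hσ
  have hσ0 : (0:ℝ) < σ := lt_of_lt_of_le one_pos hσ1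
  have hcont : Continuous (fun x : ℝ => x ^ n * Real.sqrt (σ ^ 2 - x ^ 2)) :=
    (continuous_pow n).mul ((continuous_const.sub (continuous_pow 2)).sqrt)
  have hInt : ∀ a b : ℝ,
      IntervalIntegrable (fun x : ℝ => x ^ n * Real.sqrt (σ ^ 2 - x ^ 2)) volume a b :=
    fun a b => hcont.intervalIntegrable a b
  have hsplit : (∫ x in β..σ, x ^ n * Real.sqrt (σ ^ 2 - x ^ 2))
      = (∫ x in (0:ℝ)..σ, x ^ n * Real.sqrt (σ ^ 2 - x ^ 2))
        - ∫ x in (0:ℝ)..β, x ^ n * Real.sqrt (σ ^ 2 - x ^ 2) := by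
    rw [eq_sub_iff_add_eq, add_comm]
    exact intervalIntegral.integral_add_adjacent_intervals (hInt 0 β) (hInt β σ)
  have h5 : (fun t : ℝ => (σ * t) ^ n * Real.sqrt (σ ^ 2 - (σ * t) ^ 2))
      = fun t : ℝ => σ ^ (n + 1) * (t ^ n * Real.sqrt (1 - t ^ 2)) := by
    funext t
    rw [show σ ^ 2 - (σ * t) ^ 2 = σ ^ 2 * (1 - t ^ 2) by ring, Real.sqrt_mul (sq_nonneg σ),
      Real.sqrt_sq hσ0.le, mul_pow]
    ring
  have hmain : (∫ x in (0:ℝ)..σ, x ^ n * Real.sqrt (σ ^ 2 - x ^ 2))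
      = 1 / 2 * eulerBeta (((n:ℝ) + 1) / 2) (3 / 2) * σ ^ (n + 2) := by
    have h6 := intervalIntegral.smul_integral_comp_mul_left
      (a := 0) (b := 1) (fun x => x ^ n * Real.sqrt (σ ^ 2 - x ^ 2)) σ
    simp only [mul_zero, mul_one, smul_eq_mul] at h6
    rw [← h6, h5, intervalIntegral.integral_const_mul, beta_aux]
    ring
  have hpow : β ^ (n + 1) / ((n:ℝ) + 1) * σ = ∫ x in (0:ℝ)..β, x ^ n * σ := by
    rw [intervalIntegral.integral_mul_const, integral_pow]
    push_cast; ring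
  have hIntc : IntervalIntegrable (fun x : ℝ => x ^ n * σ) volume 0 β :=
    ((continuous_pow n).mul continuous_const).intervalIntegrable 0 β
  have key : (∫ x in β..σ, x ^ n * Real.sqrt (σ ^ 2 - x ^ 2)) -
          (1 / 2 * eulerBeta (((n:ℝ) + 1) / 2) (3 / 2) * σ ^ (n + 2) -
            β ^ (n + 1) / ((n:ℝ) + 1) * σ)
      = ∫ x in (0:ℝ)..β, (x ^ n * σ - x ^ n * Real.sqrt (σ ^ 2 - x ^ 2)) := by
    rw [hsplit, hmain, hpow, intervalIntegral.integral_sub hIntc (hInt 0 β)]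
    ring
  rw [key]
  have hb : ∀ x ∈ Set.uIoc (0:ℝ) β,
      ‖x ^ n * σ - x ^ n * Real.sqrt (σ ^ 2 - x ^ 2)‖ ≤ β ^ n * (β ^ 2 / σ) := by
    intro x hx
    rw [Set.uIoc_of_le hβ] at hx
    obtain ⟨hx0, hxβ⟩ := hx
    have hxσ : x ≤ σ := le_trans hxβ hσβ
    have hs1 : Real.sqrt (σ ^ 2 - x ^ 2) ≤ σ :=
      le_trans (Real.sqrt_le_sqrt (by nlinarith)) (le_of_eq (Real.sqrt_sq hσ0.le))
    have hs2 : σ - x ^ 2 / σ ≤ Real.sqrt (σ ^ 2 - x ^ 2) := by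
      have h8 : σ * (x ^ 2 / σ) = x ^ 2 := by field_simp
      have h9 : (x ^ 2 / σ) * (x ^ 2 / σ) ≤ x ^ 2 := by
        rw [div_mul_div_comm, div_le_iff₀ (by positivity)]
        nlinarith [pow_le_pow_left₀ hx0.le hxσ 2]
      have h7 : (σ - x ^ 2 / σ) ^ 2 ≤ σ ^ 2 - x ^ 2 := by nlinarith
      have hnn : (0:ℝ) ≤ σ - x ^ 2 / σ := by
        rw [sub_nonneg, div_le_iff₀ hσ0]; nlinarith
      rw [show σ - x ^ 2 / σ = Real.sqrt ((σ - x ^ 2 / σ) ^ 2) from (Real.sqrt_sq hnn).symm]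
      exact Real.sqrt_le_sqrt h7
    rw [← mul_sub, norm_mul]
    have hxn : ‖x ^ n‖ ≤ β ^ n := by
      rw [norm_pow, Real.norm_eq_abs, abs_of_nonneg hx0.le]
      exact pow_le_pow_left₀ hx0.le hxβ n
    have hd : ‖σ - Real.sqrt (σ ^ 2 - x ^ 2)‖ ≤ β ^ 2 / σ := by
      rw [Real.norm_eq_abs, abs_of_nonneg (by linarith)]
      have : x ^ 2 / σ ≤ β ^ 2 / σ := by gcongr <;> nlinarith
      linarith
    exact mul_le_mul hxn hd (norm_nonneg _) (by positivity)
  calc ‖∫ x in (0:ℝ)..β, (x ^ n * σ - x ^ n * Real.sqrt (σ ^ 2 - x ^ 2))‖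
      ≤ β ^ n * (β ^ 2 / σ) * |β - 0| :=
        intervalIntegral.norm_integral_le_of_norm_le_const hb
    _ ≤ β ^ (n + 3) * ‖σ⁻¹‖ := by
        rw [sub_zero, abs_of_nonneg hβ, Real.norm_eq_abs, abs_of_nonneg (inv_nonneg.2 hσ0.le)]
        rw [show β ^ n * (β ^ 2 / σ) * β = β ^ (n + 3) * σ⁻¹ by rw [pow_add]; ring]
end

section
/- For every real p > 0 and every real z, one has 2 ∫_0^{π/2} ∫_0^{π/2} cos^{2p−1}(θ) sin²(θ) sin(φ) (1 + z² sin²(θ) sin²(φ))^{−1/2} dθ dφ = (1/2) B(1/2, p) ∫_0^1 (1 + z² x)^{−1/2} (1 − x)^{p − 1/2} dx. -/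
open MeasureTheory Real

section Aux

open Set


-- image lemma
lemma image_mul_sin_sq {a : ℝ} (ha : 0 < a) :
    (fun θ : ℝ => a * Real.sin θ ^ 2) '' Ioo 0 (π / 2) = Ioo 0 a := by
  have hπ := Real.pi_pos
  ext y
  simp only [mem_image, mem_Ioo]
  constructor
  · rintro ⟨θ, ⟨h0, h2⟩, rfl⟩
    have hs : 0 < Real.sin θ := Real.sin_pos_of_pos_of_lt_pi h0 (by linarith)
    have hs1 : Real.sin θ < 1 := by
      have := Real.strictMonoOn_sin ⟨by linarith, by linarith⟩ ⟨by linarith, le_refl _⟩ h2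
      simpa using this
    have hss : Real.sin θ ^ 2 < 1 := by nlinarith
    constructor
    · positivity
    · nlinarith
  · rintro ⟨h0, h1⟩
    have hya : 0 < y / a := div_pos h0 ha
    have hya1 : y / a < 1 := (div_lt_one ha).2 h1
    have ht0 : 0 < Real.sqrt (y / a) := Real.sqrt_pos.2 hya
    have ht1 : Real.sqrt (y / a) < 1 := by
      rw [show (1:ℝ) = Real.sqrt 1 by simp]
      exact Real.sqrt_lt_sqrt hya.le hya1
    refine ⟨Real.arcsin (Real.sqrt (y / a)), ⟨Real.arcsin_pos.2 ht0, Real.arcsin_lt_pi_div_two.2 ht1⟩, ?_⟩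
    rw [Real.sin_arcsin (by linarith) ht1.le, Real.sq_sqrt hya.le, mul_div_cancel₀ _ ha.ne']

lemma injOn_mul_sin_sq {a : ℝ} (ha : 0 < a) :
    Set.InjOn (fun θ : ℝ => a * Real.sin θ ^ 2) (Ioo 0 (π / 2)) := by
  have hπ := Real.pi_pos
  intro b hb c hc h
  simp only at h
  have hsb : 0 ≤ Real.sin b := (Real.sin_pos_of_pos_of_lt_pi hb.1 (by linarith [hb.2])).le
  have hsc : 0 ≤ Real.sin c := (Real.sin_pos_of_pos_of_lt_pi hc.1 (by linarith [hc.2])).le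
  have h2 : Real.sin b ^ 2 = Real.sin c ^ 2 := mul_left_cancel₀ ha.ne' h
  have hsin : Real.sin b = Real.sin c := by
    have := congrArg Real.sqrt h2
    rwa [Real.sqrt_sq hsb, Real.sqrt_sq hsc] at this
  exact Real.injOn_sin ⟨by linarith [hb.1], by linarith [hb.2]⟩ ⟨by linarith [hc.1], by linarith [hc.2]⟩ hsin

lemma cv_sin_sq {a : ℝ} (ha : 0 < a) (G : ℝ → ℝ) :
    ∫ x in Ioo 0 a, G x
      = ∫ θ in Ioo 0 (π / 2), |2 * a * Real.sin θ * Real.cos θ| * G (a * Real.sin θ ^ 2) := by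
  rw [← image_mul_sin_sq ha]
  have hderiv : ∀ θ ∈ Ioo (0:ℝ) (π/2), HasDerivWithinAt (fun θ : ℝ => a * Real.sin θ ^ 2)
      (2 * a * Real.sin θ * Real.cos θ) (Ioo 0 (π/2)) θ := by
    intro θ _
    have h := ((Real.hasDerivAt_sin θ).pow 2).const_mul a
    have he : a * (↑2 * Real.sin θ ^ (2-1) * Real.cos θ) = 2 * a * Real.sin θ * Real.cos θ := by
      norm_num; ring
    exact (he ▸ h).hasDerivWithinAt
  have := integral_image_eq_integral_abs_deriv_smul measurableSet_Ioo hderiv (injOn_mul_sin_sq ha) G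
  simpa [smul_eq_mul] using this

lemma image_affine {x : ℝ} (hx : x < 1) :
    (fun w : ℝ => (1 - x) * w + x) '' Ioo 0 1 = Ioo x 1 := by
  ext y
  simp only [mem_image, mem_Ioo]
  constructor
  · rintro ⟨w, ⟨h0, h1⟩, rfl⟩
    constructor <;> nlinarith
  · rintro ⟨h0, h1⟩
    have hne : (1:ℝ) - x ≠ 0 := by linarith
    refine ⟨(y - x) / (1 - x), ⟨div_pos (by linarith) (by linarith), ?_⟩, by field_simp; ring⟩
    rw [div_lt_one (by linarith)]; linarith

lemma cv_affine {x : ℝ} (hx : x < 1) (G : ℝ → ℝ) :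
    ∫ u in Ioo x 1, G u = ∫ w in Ioo (0:ℝ) 1, (1 - x) * G ((1 - x) * w + x) := by
  rw [← image_affine hx]
  have hderiv : ∀ w ∈ Ioo (0:ℝ) 1, HasDerivWithinAt (fun w : ℝ => (1 - x) * w + x)
      (1 - x) (Ioo 0 1) w := by
    intro w _
    have h := ((hasDerivAt_id w).const_mul (1 - x)).add_const x
    simpa using h.hasDerivWithinAt
  have hinj : Set.InjOn (fun w : ℝ => (1 - x) * w + x) (Ioo 0 1) := by
    intro b _ c _ h
    simp only at h
    have : (1 - x) * b = (1 - x) * c := by linarith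
    exact mul_left_cancel₀ (by linarith : (1:ℝ) - x ≠ 0) this
  have := integral_image_eq_integral_abs_deriv_smul measurableSet_Ioo hderiv hinj G
  simpa [smul_eq_mul, abs_of_pos (by linarith : (0:ℝ) < 1 - x)] using this

lemma integrableOn_sub_rpow {q : ℝ} (hq : -1 < q) (a c : ℝ) :
    IntegrableOn (fun t : ℝ => (c - t) ^ q) (Ioo a c) := by
  rcases le_or_gt c a with h | h
  · rw [Ioo_eq_empty (by exact fun hac => absurd h (not_le.2 hac))]
    simp
  · have h1 : IntervalIntegrable (fun x : ℝ => x ^ q) volume 0 (c - a) :=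
      intervalIntegral.intervalIntegrable_rpow' hq
    have h2 : IntervalIntegrable (fun t : ℝ => (c - t) ^ q) volume a c := by
      simpa using (h1.comp_sub_left c).symm
    exact (intervalIntegrable_iff_integrableOn_Ioo_of_le h.le).1 h2

open intervalIntegral in
lemma integral_sub_rpow_half {u : ℝ} (hu : 0 ≤ u) :
    ∫ x in Ioo 0 u, (u - x) ^ (-(1/2) : ℝ) = 2 * u ^ ((1/2) : ℝ) := by
  rw [← integral_Ioc_eq_integral_Ioo, ← integral_of_le hu]
  rw [integral_comp_sub_left (fun y : ℝ => y ^ (-(1/2):ℝ)) u]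
  rw [sub_self, sub_zero]
  rw [integral_rpow (Or.inl (by norm_num))]
  rw [Real.zero_rpow (by norm_num)]
  rw [show (-(1/2) : ℝ) + 1 = 1/2 by norm_num]
  ring

lemma lem1 (p z φ : ℝ) :
    ∫ θ in Ioo 0 (π/2), Real.cos θ ^ (2*p-1) * Real.sin θ ^ 2 * Real.sin φ *
        (1 + z^2 * Real.sin θ ^ 2 * Real.sin φ ^ 2) ^ (-(1/2) : ℝ)
      = (1/2) * ∫ u in Ioo (0:ℝ) 1, Real.sin φ * ((1-u)^(p-1) * u^((1/2):ℝ) *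
          (1 + z^2 * Real.sin φ ^ 2 * u) ^ (-(1/2) : ℝ)) := by
  rw [← MeasureTheory.integral_const_mul]
  rw [cv_sin_sq one_pos (fun u => (1:ℝ)/2 * (Real.sin φ * ((1-u)^(p-1) * u^((1/2):ℝ) *
          (1 + z^2 * Real.sin φ ^ 2 * u) ^ (-(1/2) : ℝ))))]
  apply setIntegral_congr_fun measurableSet_Ioo
  intro θ hθ
  obtain ⟨h0, h2⟩ := hθ
  have hπ := Real.pi_pos
  have hs : 0 < Real.sin θ := Real.sin_pos_of_pos_of_lt_pi h0 (by linarith)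
  have hc : 0 < Real.cos θ := Real.cos_pos_of_mem_Ioo ⟨by linarith, h2⟩
  simp only [one_mul, mul_one]
  rw [abs_of_pos (by positivity : (0:ℝ) < 2 * Real.sin θ * Real.cos θ)]
  have e1 : ((Real.sin θ ^ 2 : ℝ)) ^ ((1/2):ℝ) = Real.sin θ := by
    rw [← Real.sqrt_eq_rpow, Real.sqrt_sq hs.le]
  have e2 : ((1:ℝ) - Real.sin θ ^ 2) = Real.cos θ ^ 2 := by
    have := Real.sin_sq_add_cos_sq θ; linarith
  have e3 : ((Real.cos θ ^ 2 : ℝ)) ^ (p-1) = Real.cos θ ^ (2*p-2) := by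
    rw [← Real.rpow_natCast (Real.cos θ) 2, ← Real.rpow_mul hc.le]
    congr 1; push_cast; ring
  have e4 : Real.cos θ ^ (2*p-1) = Real.cos θ * Real.cos θ ^ (2*p-2) := by
    rw [show (2*p-1 : ℝ) = 1 + (2*p-2) by ring, Real.rpow_add hc, Real.rpow_one]
  have e5 : (1:ℝ) + z^2 * Real.sin φ ^ 2 * Real.sin θ ^ 2
      = 1 + z^2 * Real.sin θ ^ 2 * Real.sin φ ^ 2 := by ring
  rw [e2, e3, e1, e4, e5]
  ring

lemma lem2 (z : ℝ) {u : ℝ} (hu : 0 < u) :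
    ∫ φ in Ioo 0 (π/2), Real.sin φ * (1 + z^2 * Real.sin φ ^ 2 * u) ^ (-(1/2) : ℝ)
      = ∫ x in Ioo 0 u, ((1:ℝ)/2 * u ^ (-(1/2):ℝ)) *
          ((1 + z^2 * x) ^ (-(1/2):ℝ) * (u - x) ^ (-(1/2):ℝ)) := by
  rw [cv_sin_sq hu (fun x => ((1:ℝ)/2 * u ^ (-(1/2):ℝ)) *
          ((1 + z^2 * x) ^ (-(1/2):ℝ) * (u - x) ^ (-(1/2):ℝ)))]
  apply setIntegral_congr_fun measurableSet_Ioo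
  intro φ hφ
  obtain ⟨h0, h2⟩ := hφ
  beta_reduce
  have hπ := Real.pi_pos
  have hs : 0 < Real.sin φ := Real.sin_pos_of_pos_of_lt_pi h0 (by linarith)
  have hc : 0 < Real.cos φ := Real.cos_pos_of_mem_Ioo ⟨by linarith, h2⟩
  rw [abs_of_pos (by positivity : (0:ℝ) < 2 * u * Real.sin φ * Real.cos φ)]
  have eA : (1:ℝ) + z^2 * (u * Real.sin φ ^ 2) = 1 + z^2 * Real.sin φ ^ 2 * u := by ring
  have eB : u - u * Real.sin φ ^ 2 = u * Real.cos φ ^ 2 := by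
    have := Real.sin_sq_add_cos_sq φ; nlinarith
  rw [eA, eB, Real.mul_rpow hu.le (sq_nonneg _)]
  have hvv : u ^ (-(1/2):ℝ) * u ^ (-(1/2):ℝ) = u⁻¹ := by
    rw [← Real.rpow_add hu]
    norm_num
    exact Real.rpow_neg_one u
  have hu1 : u * (u ^ (-(1/2):ℝ) * u ^ (-(1/2):ℝ)) = 1 := by
    rw [hvv]; exact mul_inv_cancel₀ hu.ne'
  have hcc : Real.cos φ * (Real.cos φ ^ 2) ^ (-(1/2):ℝ) = 1 := by
    rw [← Real.rpow_natCast (Real.cos φ) 2, ← Real.rpow_mul hc.le,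
      show ((2:ℕ):ℝ) * (-(1/2)) = -1 by push_cast; ring, Real.rpow_neg_one]
    exact mul_inv_cancel₀ hc.ne'
  set A := (1 + z^2 * Real.sin φ ^ 2 * u) ^ (-(1/2) : ℝ) with hA
  linear_combination (-(Real.sin φ * A * (Real.cos φ * (Real.cos φ ^ 2) ^ (-(1/2):ℝ)))) * hu1
    + (-(Real.sin φ * A)) * hcc

lemma lem3 (p : ℝ) {x : ℝ} (hx : x ∈ Ioo (0:ℝ) 1) :
    ∫ u in Ioo x 1, (1-u)^(p-1) * (u-x) ^ (-(1/2):ℝ)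
      = (1-x) ^ (p - 1/2) * ∫ w in Ioo (0:ℝ) 1, w ^ ((1/2:ℝ) - 1) * (1-w)^(p-1) := by
  rw [cv_affine hx.2, ← MeasureTheory.integral_const_mul]
  apply setIntegral_congr_fun measurableSet_Ioo
  intro w hw
  obtain ⟨hw0, hw1⟩ := hw
  beta_reduce
  have hx1 : (0:ℝ) < 1 - x := by linarith [hx.2]
  have r1 : 1 - ((1-x)*w + x) = (1-x)*(1-w) := by ring
  have r2 : ((1-x)*w + x) - x = (1-x)*w := by ring
  rw [r1, r2, Real.mul_rpow hx1.le (by linarith : (0:ℝ) ≤ 1 - w),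
    Real.mul_rpow hx1.le hw0.le]
  have c1 : (1-x) * ((1-x)^(p-1) * (1-x)^(-(1/2):ℝ)) = (1-x)^(p - 1/2) := by
    nth_rw 1 [← Real.rpow_one (1-x)]
    rw [← Real.rpow_add hx1, ← Real.rpow_add hx1]
    congr 1; ring
  have c2 : w ^ ((1/2:ℝ) - 1) = w ^ (-(1/2):ℝ) := by norm_num
  rw [c2]
  linear_combination ((1-w)^(p-1) * w ^ (-(1/2):ℝ)) * c1

lemma swap1 {p : ℝ} (hp : 0 < p) (z : ℝ) :
    ∫ φ in Ioo 0 (π/2), ∫ u in Ioo (0:ℝ) 1, Real.sin φ * ((1-u)^(p-1) * u^((1/2):ℝ) *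
        (1 + z^2 * Real.sin φ^2 * u)^(-(1/2):ℝ))
    = ∫ u in Ioo (0:ℝ) 1, ∫ φ in Ioo 0 (π/2), Real.sin φ * ((1-u)^(p-1) * u^((1/2):ℝ) *
        (1 + z^2 * Real.sin φ^2 * u)^(-(1/2):ℝ)) := by
  set F : ℝ → ℝ → ℝ := fun φ u => Real.sin φ * ((1-u)^(p-1) * u^((1/2):ℝ) *
        (1 + z^2 * Real.sin φ^2 * u)^(-(1/2):ℝ)) with hF
  have hmeas : Measurable (Function.uncurry F) := by unfold F; fun_prop
  have hbase : IntegrableOn (fun u : ℝ => (1-u)^(p-1)) (Ioo 0 1) :=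
    integrableOn_sub_rpow (by linarith) 0 1
  have hFb : ∀ (φ : ℝ), ∀ u ∈ Ioo (0:ℝ) 1, ‖F φ u‖ ≤ (1-u)^(p-1) := by
    intro φ u hu
    obtain ⟨hu0, hu1⟩ := hu
    have hbpos : (0:ℝ) ≤ 1 + z^2 * Real.sin φ^2 * u := by positivity
    have h2 : (0:ℝ) ≤ (1-u)^(p-1) := Real.rpow_nonneg (by linarith) _
    have h3 : u^((1/2):ℝ) ≤ 1 := Real.rpow_le_one hu0.le hu1.le (by norm_num)
    have h3' : (0:ℝ) ≤ u^((1/2):ℝ) := Real.rpow_nonneg hu0.le _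
    have hzz : (0:ℝ) ≤ z^2 * Real.sin φ^2 * u := by positivity
    have h4 : (1 + z^2 * Real.sin φ^2 * u)^(-(1/2):ℝ) ≤ 1 :=
      Real.rpow_le_one_of_one_le_of_nonpos (by linarith) (by norm_num)
    have h4' : (0:ℝ) ≤ (1 + z^2 * Real.sin φ^2 * u)^(-(1/2):ℝ) := Real.rpow_nonneg hbpos _
    have h1 : |Real.sin φ| ≤ 1 := abs_sin_le_one φ
    have hX : (0:ℝ) ≤ (1-u)^(p-1) * u^((1/2):ℝ) *
        (1 + z^2 * Real.sin φ^2 * u)^(-(1/2):ℝ) := by positivity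
    rw [hF]
    rw [Real.norm_eq_abs, abs_mul, abs_of_nonneg hX]
    calc |Real.sin φ| * ((1-u)^(p-1) * u^((1/2):ℝ) *
          (1 + z^2 * Real.sin φ^2 * u)^(-(1/2):ℝ))
        ≤ 1 * ((1-u)^(p-1) * 1 * 1) := by
          apply mul_le_mul h1 _ hX one_pos.le
          apply mul_le_mul (mul_le_mul le_rfl h3 h3' h2) h4 h4'
          positivity
      _ = (1-u)^(p-1) := by ring
  have hsec : ∀ φ : ℝ, Integrable (fun u => F φ u) (volume.restrict (Ioo 0 1)) := by
    intro φ
    apply hbase.mono' hmeas.of_uncurry_left.aestronglyMeasurable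
    filter_upwards [ae_restrict_mem measurableSet_Ioo] with u hu
    exact hFb φ u hu
  haveI : IsFiniteMeasure (volume.restrict (Ioo (0:ℝ) 1)) :=
    ⟨by rw [Measure.restrict_apply_univ]; exact measure_Ioo_lt_top⟩
  haveI : IsFiniteMeasure (volume.restrict (Ioo (0:ℝ) (π/2))) :=
    ⟨by rw [Measure.restrict_apply_univ]; exact measure_Ioo_lt_top⟩
  apply integral_integral_swap
  apply (integrable_prod_iff hmeas.aestronglyMeasurable).2
  constructor
  · exact Filter.Eventually.of_forall fun φ => hsec φ
  · apply Integrable.mono' (integrable_const (∫ u in Ioo (0:ℝ) 1, (1-u)^(p-1)))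
      (hmeas.norm.aestronglyMeasurable.integral_prod_right')
    apply Filter.Eventually.of_forall
    intro φ
    rw [Real.norm_eq_abs, abs_of_nonneg (integral_nonneg fun u => norm_nonneg _)]
    exact setIntegral_mono_on ((hsec φ).norm) hbase measurableSet_Ioo (fun u hu => hFb φ u hu)

lemma swap2 {p : ℝ} (hp : 0 < p) (z : ℝ) :
    ∫ u in Ioo (0:ℝ) 1, ∫ x in Ioo 0 u, (1-u)^(p-1) * ((1 + z^2*x)^(-(1/2):ℝ) * (u-x)^(-(1/2):ℝ))
    = ∫ x in Ioo (0:ℝ) 1, ∫ u in Ioo x 1, (1-u)^(p-1) * ((1 + z^2*x)^(-(1/2):ℝ) * (u-x)^(-(1/2):ℝ)) := by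
  set h : ℝ → ℝ → ℝ := fun u x => (1-u)^(p-1) * ((1 + z^2*x)^(-(1/2):ℝ) * (u-x)^(-(1/2):ℝ)) with hh
  set Φ : ℝ × ℝ → ℝ := fun q => if q.2 < q.1 then h q.1 q.2 else 0 with hΦ
  haveI : IsFiniteMeasure (volume.restrict (Ioo (0:ℝ) 1)) :=
    ⟨by rw [Measure.restrict_apply_univ]; exact measure_Ioo_lt_top⟩
  have hmeash : Measurable (Function.uncurry h) := by unfold h; fun_prop
  have hmeas : Measurable Φ := by
    apply Measurable.ite (measurableSet_lt measurable_snd measurable_fst) _ measurable_const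
    exact hmeash
  have hbase : IntegrableOn (fun u : ℝ => (1-u)^(p-1)) (Ioo 0 1) :=
    integrableOn_sub_rpow (by linarith) 0 1
  -- basic bounds
  have hgb : ∀ x : ℝ, 0 < x → (1 + z^2*x)^(-(1/2):ℝ) ≤ 1 := by
    intro x hx
    have : (0:ℝ) ≤ z^2 * x := by positivity
    exact Real.rpow_le_one_of_one_le_of_nonpos (by linarith) (by norm_num)
  have hgb' : ∀ x : ℝ, 0 < x → (0:ℝ) ≤ (1 + z^2*x)^(-(1/2):ℝ) := fun x hx =>
    Real.rpow_nonneg (by positivity) _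
  -- pointwise bound on h
  have hhb : ∀ u, 0 ≤ u → u ≤ 1 → ∀ x ∈ Ioo (0:ℝ) u, ‖h u x‖ ≤ (1-u)^(p-1) * (u-x)^(-(1/2):ℝ) := by
    intro u hu0 hu1 x hx
    obtain ⟨hx0, hxu⟩ := hx
    have hc1 : (0:ℝ) ≤ (1-u)^(p-1) := Real.rpow_nonneg (by linarith) _
    have hc2 : (0:ℝ) ≤ (u-x)^(-(1/2):ℝ) := Real.rpow_nonneg (by linarith) _
    rw [hh, Real.norm_eq_abs, abs_of_nonneg (by positivity)]
    calc (1-u)^(p-1) * ((1 + z^2*x)^(-(1/2):ℝ) * (u-x)^(-(1/2):ℝ))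
        ≤ (1-u)^(p-1) * (1 * (u-x)^(-(1/2):ℝ)) := by
          apply mul_le_mul_of_nonneg_left _ hc1
          exact mul_le_mul_of_nonneg_right (hgb x hx0) hc2
      _ = (1-u)^(p-1) * (u-x)^(-(1/2):ℝ) := by ring
  -- section integrability in x
  have hsect : ∀ u ∈ Ioo (0:ℝ) 1, IntegrableOn (fun x => h u x) (Ioo 0 u) := by
    intro u hu
    have hdom : IntegrableOn (fun x : ℝ => (1-u)^(p-1) * (u-x)^(-(1/2):ℝ)) (Ioo 0 u) :=
      (integrableOn_sub_rpow (by norm_num) 0 u).const_mul _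
    apply hdom.mono' hmeash.of_uncurry_left.aestronglyMeasurable
    filter_upwards [ae_restrict_mem measurableSet_Ioo] with x hx
    exact hhb u hu.1.le hu.2.le x hx
  -- section description
  have hsecx : ∀ u ∈ Ioo (0:ℝ) 1, (Iio u ∩ Ioo 0 1) = Ioo (0:ℝ) u := by
    intro u hu
    ext t
    simp only [mem_inter_iff, mem_Iio, mem_Ioo]
    constructor
    · rintro ⟨a, b, c⟩; exact ⟨b, a⟩
    · rintro ⟨a, b⟩; exact ⟨b, a, b.trans hu.2⟩
  have hsecu : ∀ x ∈ Ioo (0:ℝ) 1, (Ioi x ∩ Ioo 0 1) = Ioo x 1 := by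
    intro x hx
    ext t
    simp only [mem_inter_iff, mem_Ioi, mem_Ioo]
    constructor
    · rintro ⟨a, b, c⟩; exact ⟨a, c⟩
    · rintro ⟨a, b⟩; exact ⟨a, hx.1.trans a, b⟩
  have hindx : ∀ u : ℝ, (fun x => Φ (u, x)) = (Iio u).indicator (fun x => h u x) := by
    intro u; funext x
    simp only [hΦ, Set.indicator_apply, mem_Iio]
  have hindu : ∀ x : ℝ, (fun u => Φ (u, x)) = (Ioi x).indicator (fun u => h u x) := by
    intro x; funext u
    simp only [hΦ, Set.indicator_apply, mem_Ioi]
  -- integral of each x-section over Ioo 0 1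
  have hsecEq : ∀ u ∈ Ioo (0:ℝ) 1, ∫ x in Ioo (0:ℝ) 1, Φ (u, x) = ∫ x in Ioo 0 u, h u x := by
    intro u hu
    rw [hindx u, integral_indicator measurableSet_Iio]
    rw [Measure.restrict_restrict measurableSet_Iio, hsecx u hu]
  have hsecEq' : ∀ x ∈ Ioo (0:ℝ) 1, ∫ u in Ioo (0:ℝ) 1, Φ (u, x) = ∫ u in Ioo x 1, h u x := by
    intro x hx
    rw [hindu x, integral_indicator measurableSet_Ioi]
    rw [Measure.restrict_restrict measurableSet_Ioi, hsecu x hx]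
  -- integrability on the product
  have hint : Integrable (Function.uncurry fun u x => Φ (u, x))
      ((volume.restrict (Ioo (0:ℝ) 1)).prod (volume.restrict (Ioo (0:ℝ) 1))) := by
    apply (integrable_prod_iff hmeas.aestronglyMeasurable).2
    constructor
    · filter_upwards [ae_restrict_mem measurableSet_Ioo] with u hu
      rw [hindx u, integrable_indicator_iff measurableSet_Iio]
      rw [IntegrableOn, Measure.restrict_restrict measurableSet_Iio, hsecx u hu]
      exact hsect u hu
    · apply Integrable.mono' (hbase.const_mul 2)
        (hmeas.norm.aestronglyMeasurable.integral_prod_right')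
      filter_upwards [ae_restrict_mem measurableSet_Ioo] with u hu
      have hnormsec : (fun x => ‖Φ (u, x)‖) = (Iio u).indicator (fun x => ‖h u x‖) := by
        funext x
        simp only [hΦ, Set.indicator_apply, mem_Iio, apply_ite norm, norm_zero]
      rw [Real.norm_eq_abs, abs_of_nonneg (integral_nonneg fun x => norm_nonneg _)]
      rw [hnormsec, integral_indicator measurableSet_Iio,
        Measure.restrict_restrict measurableSet_Iio, hsecx u hu]
      have hdom : IntegrableOn (fun x : ℝ => (1-u)^(p-1) * (u-x)^(-(1/2):ℝ)) (Ioo 0 u) :=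
        (integrableOn_sub_rpow (by norm_num) 0 u).const_mul _
      calc ∫ x in Ioo 0 u, ‖h u x‖
          ≤ ∫ x in Ioo 0 u, (1-u)^(p-1) * (u-x)^(-(1/2):ℝ) :=
            setIntegral_mono_on (hsect u hu).norm hdom measurableSet_Ioo
              (fun x hx => hhb u hu.1.le hu.2.le x hx)
        _ = (1-u)^(p-1) * ∫ x in Ioo 0 u, (u-x)^(-(1/2):ℝ) := integral_const_mul _ _
        _ = (1-u)^(p-1) * (2 * u^((1/2):ℝ)) := by rw [integral_sub_rpow_half hu.1.le]
        _ ≤ (1-u)^(p-1) * (2 * 1) := by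
            apply mul_le_mul_of_nonneg_left _ (Real.rpow_nonneg (by linarith [hu.2]) _)
            have := Real.rpow_le_one hu.1.le hu.2.le (by norm_num : (0:ℝ) ≤ 1/2)
            linarith
        _ = 2 * (1-u)^(p-1) := by ring
  calc ∫ u in Ioo (0:ℝ) 1, ∫ x in Ioo 0 u, h u x
      = ∫ u in Ioo (0:ℝ) 1, ∫ x in Ioo (0:ℝ) 1, Φ (u, x) :=
        (setIntegral_congr_fun measurableSet_Ioo fun u hu => (hsecEq u hu).symm)
    _ = ∫ x in Ioo (0:ℝ) 1, ∫ u in Ioo (0:ℝ) 1, Φ (u, x) := integral_integral_swap hint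
    _ = ∫ x in Ioo (0:ℝ) 1, ∫ u in Ioo x 1, h u x :=
        setIntegral_congr_fun measurableSet_Ioo fun x hx => hsecEq' x hx

lemma lemA (p z : ℝ) {u : ℝ} (hu : u ∈ Ioo (0:ℝ) 1) :
    ∫ φ in Ioo 0 (π/2), Real.sin φ * ((1-u)^(p-1) * u^((1/2):ℝ) *
        (1 + z^2*Real.sin φ^2*u)^(-(1/2):ℝ))
    = (1/2) * ∫ x in Ioo 0 u, (1-u)^(p-1) * ((1 + z^2*x)^(-(1/2):ℝ) * (u-x)^(-(1/2):ℝ)) := by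
  have h1 : (fun φ => Real.sin φ * ((1-u)^(p-1) * u^((1/2):ℝ) *
        (1 + z^2*Real.sin φ^2*u)^(-(1/2):ℝ)))
      = fun φ => ((1-u)^(p-1) * u^((1/2):ℝ)) *
          (Real.sin φ * (1 + z^2*Real.sin φ^2*u)^(-(1/2):ℝ)) :=
    funext fun φ => by ring
  rw [h1, integral_const_mul, lem2 z hu.1, integral_const_mul, integral_const_mul]
  have huu : u^((1/2):ℝ) * u^(-(1/2):ℝ) = 1 := by
    rw [← Real.rpow_add hu.1]; norm_num
  set I := ∫ x in Ioo 0 u, (1 + z^2*x)^(-(1/2):ℝ) * (u-x)^(-(1/2):ℝ) with hI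
  linear_combination ((1:ℝ)/2 * (1-u)^(p-1) * I) * huu

end Aux

open intervalIntegral Set in
theorem stmt_4 (p : ℝ) (hp : 0 < p) (z : ℝ) :
    2 * ∫ φ in (0:ℝ)..(Real.pi / 2), ∫ θ in (0:ℝ)..(Real.pi / 2),
          Real.cos θ ^ (2 * p - 1) * Real.sin θ ^ 2 * Real.sin φ *
            (1 + z ^ 2 * Real.sin θ ^ 2 * Real.sin φ ^ 2) ^ (-(1 / 2) : ℝ) =
      (1 / 2) * eulerBeta (1 / 2) p *
        ∫ x in (0:ℝ)..1, (1 + z ^ 2 * x) ^ (-(1 / 2) : ℝ) * (1 - x) ^ (p - 1 / 2) := by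
  have hπ := Real.pi_pos
  have h2π : (0:ℝ) ≤ π/2 := by linarith
  have hBeta : eulerBeta (1/2) p
      = ∫ w in Ioo (0:ℝ) 1, w ^ ((1/2:ℝ) - 1) * (1-w)^(p-1) := by
    rw [eulerBeta, integral_of_le zero_le_one, integral_Ioc_eq_integral_Ioo]
  rw [integral_of_le h2π, integral_Ioc_eq_integral_Ioo,
      integral_of_le zero_le_one, integral_Ioc_eq_integral_Ioo]
  calc 2 * ∫ φ in Ioo (0:ℝ) (π/2), (∫ θ in (0:ℝ)..(π/2),
          Real.cos θ ^ (2 * p - 1) * Real.sin θ ^ 2 * Real.sin φ *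
            (1 + z ^ 2 * Real.sin θ ^ 2 * Real.sin φ ^ 2) ^ (-(1 / 2) : ℝ))
      = 2 * ∫ φ in Ioo (0:ℝ) (π/2), (1/2) * ∫ u in Ioo (0:ℝ) 1,
          Real.sin φ * ((1-u)^(p-1) * u^((1/2):ℝ) *
            (1 + z^2 * Real.sin φ ^ 2 * u) ^ (-(1/2) : ℝ)) := by
        congr 1
        apply setIntegral_congr_fun measurableSet_Ioo
        intro φ _
        beta_reduce
        rw [integral_of_le h2π, integral_Ioc_eq_integral_Ioo]
        exact lem1 p z φ
    _ = ∫ φ in Ioo (0:ℝ) (π/2), ∫ u in Ioo (0:ℝ) 1,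
          Real.sin φ * ((1-u)^(p-1) * u^((1/2):ℝ) *
            (1 + z^2 * Real.sin φ ^ 2 * u) ^ (-(1/2) : ℝ)) := by
        rw [MeasureTheory.integral_const_mul]; ring
    _ = ∫ u in Ioo (0:ℝ) 1, ∫ φ in Ioo (0:ℝ) (π/2),
          Real.sin φ * ((1-u)^(p-1) * u^((1/2):ℝ) *
            (1 + z^2 * Real.sin φ ^ 2 * u) ^ (-(1/2) : ℝ)) := swap1 hp z
    _ = ∫ u in Ioo (0:ℝ) 1, (1/2) * ∫ x in Ioo 0 u,
          (1-u)^(p-1) * ((1 + z^2*x)^(-(1/2):ℝ) * (u-x)^(-(1/2):ℝ)) := by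
        apply setIntegral_congr_fun measurableSet_Ioo
        intro u hu
        beta_reduce
        exact lemA p z hu
    _ = (1/2) * ∫ u in Ioo (0:ℝ) 1, ∫ x in Ioo 0 u,
          (1-u)^(p-1) * ((1 + z^2*x)^(-(1/2):ℝ) * (u-x)^(-(1/2):ℝ)) :=
        MeasureTheory.integral_const_mul _ _
    _ = (1/2) * ∫ x in Ioo (0:ℝ) 1, ∫ u in Ioo x 1,
          (1-u)^(p-1) * ((1 + z^2*x)^(-(1/2):ℝ) * (u-x)^(-(1/2):ℝ)) := by
        rw [swap2 hp z]
    _ = (1/2) * ∫ x in Ioo (0:ℝ) 1, (1 + z^2*x)^(-(1/2):ℝ) *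
          ((1-x)^(p-1/2) * ∫ w in Ioo (0:ℝ) 1, w ^ ((1/2:ℝ) - 1) * (1-w)^(p-1)) := by
        congr 1
        apply setIntegral_congr_fun measurableSet_Ioo
        intro x hx
        beta_reduce
        calc ∫ u in Ioo x 1, (1-u)^(p-1) * ((1 + z^2*x)^(-(1/2):ℝ) * (u-x)^(-(1/2):ℝ))
            = ∫ u in Ioo x 1, (1 + z^2*x)^(-(1/2):ℝ) * ((1-u)^(p-1) * (u-x)^(-(1/2):ℝ)) := by
              apply setIntegral_congr_fun measurableSet_Ioo
              intro u _
              beta_reduce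
              ring
          _ = (1 + z^2*x)^(-(1/2):ℝ) * ∫ u in Ioo x 1, (1-u)^(p-1) * (u-x)^(-(1/2):ℝ) :=
              MeasureTheory.integral_const_mul _ _
          _ = (1 + z^2*x)^(-(1/2):ℝ) *
              ((1-x)^(p-1/2) * ∫ w in Ioo (0:ℝ) 1, w ^ ((1/2:ℝ) - 1) * (1-w)^(p-1)) := by
              rw [lem3 p hx]
    _ = (1/2) * eulerBeta (1/2) p *
          ∫ x in Ioo (0:ℝ) 1, (1 + z ^ 2 * x) ^ (-(1 / 2) : ℝ) * (1 - x) ^ (p - 1 / 2) := by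
        rw [hBeta]
        rw [show (fun x => (1 + z^2*x)^(-(1/2):ℝ) *
            ((1-x)^(p-1/2) * ∫ w in Ioo (0:ℝ) 1, w ^ ((1/2:ℝ) - 1) * (1-w)^(p-1)))
          = fun x => (∫ w in Ioo (0:ℝ) 1, w ^ ((1/2:ℝ) - 1) * (1-w)^(p-1)) *
              ((1 + z^2*x)^(-(1/2):ℝ) * (1-x)^(p-1/2)) from funext fun x => by ring,
          MeasureTheory.integral_const_mul]
        ring
end

section
/- Define I(z; p) = (1/2) B(1/2, p) ∫_0^1 (1 + z² x)^{−1/2} (1 − x)^{p − 1/2} dx for p > 0 and z real. Then for every p > 0 and every real z, one has z² (1 + p) I(z; p+1) = p (1 + z²) I(z; p) − p B(p, 3/2). -/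
open MeasureTheory Real intervalIntegral

/-- `I(z; p) = (1/2) B(1/2, p) ∫ x in 0..1, (1 + z² x)^(-1/2) (1 - x)^(p - 1/2)`. -/
noncomputable def edgeI (z p : ℝ) : ℝ :=
  (1 / 2) * eulerBeta (1 / 2) p *
    ∫ x in (0:ℝ)..1, (1 + z ^ 2 * x) ^ (-(1 / 2) : ℝ) * (1 - x) ^ (p - 1 / 2)

lemma ii_one_sub_rpow {r : ℝ} (hr : -1 < r) :
    IntervalIntegrable (fun t : ℝ => (1 - t) ^ r) volume 0 1 := by
  have h := (intervalIntegral.intervalIntegrable_rpow' (a := 0) (b := 1) hr).comp_sub_left 1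
  simpa using h.symm

lemma ii_rpow_mul {q r : ℝ} (hq : -1 < q) (hr : -1 < r) :
    IntervalIntegrable (fun t : ℝ => t ^ q * (1 - t) ^ r) volume 0 1 := by
  apply IntervalIntegrable.trans (b := (1/2 : ℝ))
  · apply IntervalIntegrable.mul_continuousOn (intervalIntegral.intervalIntegrable_rpow' hq)
    apply ContinuousOn.rpow_const (by fun_prop)
    intro x hx
    rw [Set.uIcc_of_le (by norm_num : (0:ℝ) ≤ 1/2)] at hx
    exact Or.inl (by nlinarith [hx.2])
  · apply IntervalIntegrable.continuousOn_mul
    · exact (ii_one_sub_rpow hr).mono_set (by rw [Set.uIcc_of_le (by norm_num : (1/2:ℝ) ≤ 1), Set.uIcc_of_le zero_le_one]; exact Set.Icc_subset_Icc (by norm_num) le_rfl)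
    · apply ContinuousOn.rpow_const (by fun_prop)
      intro x hx
      rw [Set.uIcc_of_le (by norm_num : (1/2:ℝ) ≤ 1)] at hx
      exact Or.inl (by nlinarith [hx.1])

lemma aux_pow {x : ℝ} (hx : x ≠ 0) {y y' : ℝ} (h : y = y' + 1) : x ^ y = x ^ y' * x := by
  rw [h, Real.rpow_add_one hx]

-- first Beta recurrence
lemma beta_rec1 (p : ℝ) (hp : 0 < p) :
    (p + 1/2) * (∫ t in (0:ℝ)..1, t ^ (-(1/2):ℝ) * (1-t) ^ p)
      - p * (∫ t in (0:ℝ)..1, t ^ (-(1/2):ℝ) * (1-t) ^ (p-1)) = 0 := by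
  have hi1 : IntervalIntegrable (fun t : ℝ => t ^ (-(1/2):ℝ) * (1-t) ^ p) volume 0 1 :=
    ii_rpow_mul (by norm_num) (by linarith)
  have hi2 : IntervalIntegrable (fun t : ℝ => t ^ (-(1/2):ℝ) * (1-t) ^ (p-1)) volume 0 1 :=
    ii_rpow_mul (by norm_num) (by linarith)
  have hcont : ContinuousOn (fun t : ℝ => t ^ ((1/2):ℝ) * (1-t) ^ p) (Set.Icc 0 1) := by
    apply ContinuousOn.mul
    · exact (Real.continuous_rpow_const (by norm_num)).continuousOn
    · exact ((continuous_const.sub continuous_id).rpow_const (fun x => Or.inr hp.le)).continuousOn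
  have hderiv : ∀ t ∈ Set.Ioo (0:ℝ) 1, HasDerivAt (fun t : ℝ => t ^ ((1/2):ℝ) * (1-t) ^ p)
      ((p + 1/2) * (t ^ (-(1/2):ℝ) * (1-t) ^ p) - p * (t ^ (-(1/2):ℝ) * (1-t) ^ (p-1))) t := by
    intro t ht
    have ht0 : (0:ℝ) < t := ht.1
    have ht1 : (0:ℝ) < 1 - t := by linarith [ht.2]
    have h1 : HasDerivAt (fun t : ℝ => t ^ ((1/2):ℝ)) ((1/2) * t ^ ((1/2:ℝ) - 1)) t :=
      Real.hasDerivAt_rpow_const (Or.inl ht0.ne')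
    have h2 : HasDerivAt (fun t : ℝ => (1-t) ^ p) (-1 * p * (1-t) ^ (p-1)) t := by
      exact ((hasDerivAt_id t).const_sub 1).rpow_const (Or.inl ht1.ne')
    refine (h1.mul h2).congr_deriv ?_
    have e1 : t ^ ((1/2):ℝ) = t ^ (-(1/2):ℝ) * t := aux_pow ht0.ne' (by norm_num)
    have e2 : (1-t) ^ p = (1-t) ^ (p-1) * (1-t) := aux_pow ht1.ne' (by ring)
    have e3 : t ^ ((1/2:ℝ) - 1) = t ^ (-(1/2):ℝ) := by norm_num
    rw [e1, e2, e3]; ring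
  have key := intervalIntegral.integral_eq_sub_of_hasDerivAt_of_le zero_le_one hcont hderiv
      ((hi1.const_mul (p + 1/2)).sub (hi2.const_mul p))
  rw [intervalIntegral.integral_sub (hi1.const_mul _) (hi2.const_mul _),
    intervalIntegral.integral_const_mul, intervalIntegral.integral_const_mul] at key
  rw [key]
  norm_num [Real.zero_rpow hp.ne', Real.zero_rpow (by norm_num : ((1:ℝ)/2) ≠ 0)]

-- second Beta recurrence
lemma beta_rec2 (p : ℝ) (hp : 0 < p) :
    (∫ t in (0:ℝ)..1, t ^ (-(1/2):ℝ) * (1-t) ^ p)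
      - 2 * p * (∫ t in (0:ℝ)..1, t ^ ((1/2):ℝ) * (1-t) ^ (p-1)) = 0 := by
  have hi1 : IntervalIntegrable (fun t : ℝ => t ^ (-(1/2):ℝ) * (1-t) ^ p) volume 0 1 :=
    ii_rpow_mul (by norm_num) (by linarith)
  have hi2 : IntervalIntegrable (fun t : ℝ => t ^ ((1/2):ℝ) * (1-t) ^ (p-1)) volume 0 1 :=
    ii_rpow_mul (by norm_num) (by linarith)
  have hcont : ContinuousOn (fun t : ℝ => 2 * (t ^ ((1/2):ℝ) * (1-t) ^ p)) (Set.Icc 0 1) := by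
    apply ContinuousOn.mul continuousOn_const
    apply ContinuousOn.mul
    · exact (Real.continuous_rpow_const (by norm_num)).continuousOn
    · exact ((continuous_const.sub continuous_id).rpow_const (fun x => Or.inr hp.le)).continuousOn
  have hderiv : ∀ t ∈ Set.Ioo (0:ℝ) 1, HasDerivAt (fun t : ℝ => 2 * (t ^ ((1/2):ℝ) * (1-t) ^ p))
      (t ^ (-(1/2):ℝ) * (1-t) ^ p - 2 * p * (t ^ ((1/2):ℝ) * (1-t) ^ (p-1))) t := by
    intro t ht
    have ht0 : (0:ℝ) < t := ht.1
    have ht1 : (0:ℝ) < 1 - t := by linarith [ht.2]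
    have h1 : HasDerivAt (fun t : ℝ => t ^ ((1/2):ℝ)) ((1/2) * t ^ ((1/2:ℝ) - 1)) t :=
      Real.hasDerivAt_rpow_const (Or.inl ht0.ne')
    have h2 : HasDerivAt (fun t : ℝ => (1-t) ^ p) (-1 * p * (1-t) ^ (p-1)) t :=
      ((hasDerivAt_id t).const_sub 1).rpow_const (Or.inl ht1.ne')
    refine ((h1.mul h2).const_mul 2).congr_deriv ?_
    have e1 : t ^ ((1/2):ℝ) = t ^ (-(1/2):ℝ) * t := aux_pow ht0.ne' (by norm_num)
    have e2 : (1-t) ^ p = (1-t) ^ (p-1) * (1-t) := aux_pow ht1.ne' (by ring)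
    have e3 : t ^ ((1/2:ℝ) - 1) = t ^ (-(1/2):ℝ) := by norm_num
    rw [e1, e2, e3]; ring
  have key := intervalIntegral.integral_eq_sub_of_hasDerivAt_of_le zero_le_one hcont hderiv
      (hi1.sub (hi2.const_mul (2*p)))
  rw [intervalIntegral.integral_sub hi1 (hi2.const_mul _),
    intervalIntegral.integral_const_mul] at key
  rw [key]
  norm_num [Real.zero_rpow hp.ne', Real.zero_rpow (by norm_num : ((1:ℝ)/2) ≠ 0)]

-- main integral recurrence
lemma main_rec (p : ℝ) (hp : 0 < p) (z : ℝ) :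
    z ^ 2 * (p+1) * (∫ x in (0:ℝ)..1, (1 + z ^ 2 * x) ^ (-(1 / 2) : ℝ) * (1 - x) ^ (p + 1 - 1 / 2))
      - (p + 1/2) * (1 + z ^ 2) *
        (∫ x in (0:ℝ)..1, (1 + z ^ 2 * x) ^ (-(1 / 2) : ℝ) * (1 - x) ^ (p - 1 / 2)) = -1 := by
  have hbase : ∀ x ∈ Set.uIcc (0:ℝ) 1, (0:ℝ) < 1 + z ^ 2 * x := by
    intro x hx
    rw [Set.uIcc_of_le zero_le_one] at hx
    nlinarith [hx.1, sq_nonneg z]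
  have hg : ContinuousOn (fun x : ℝ => (1 + z ^ 2 * x) ^ (-(1 / 2) : ℝ)) (Set.uIcc (0:ℝ) 1) := by
    apply ContinuousOn.rpow_const (by fun_prop)
    exact fun x hx => Or.inl (hbase x hx).ne'
  have hi1 : IntervalIntegrable
      (fun x : ℝ => (1 + z ^ 2 * x) ^ (-(1 / 2) : ℝ) * (1 - x) ^ (p + 1 - 1 / 2)) volume 0 1 :=
    (ii_one_sub_rpow (by linarith)).continuousOn_mul hg
  have hi2 : IntervalIntegrable
      (fun x : ℝ => (1 + z ^ 2 * x) ^ (-(1 / 2) : ℝ) * (1 - x) ^ (p - 1 / 2)) volume 0 1 :=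
    (ii_one_sub_rpow (by linarith)).continuousOn_mul hg
  have hcont : ContinuousOn
      (fun x : ℝ => (1 + z ^ 2 * x) ^ ((1/2) : ℝ) * (1 - x) ^ (p + 1/2)) (Set.Icc 0 1) := by
    apply ContinuousOn.mul
    · exact ((continuous_const.add (continuous_const.mul continuous_id)).rpow_const
        (fun x => Or.inr (by norm_num))).continuousOn
    · exact ((continuous_const.sub continuous_id).rpow_const
        (fun x => Or.inr (by linarith))).continuousOn
  have hderiv : ∀ x ∈ Set.Ioo (0:ℝ) 1,
      HasDerivAt (fun x : ℝ => (1 + z ^ 2 * x) ^ ((1/2) : ℝ) * (1 - x) ^ (p + 1/2))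
        (z ^ 2 * (p+1) * ((1 + z ^ 2 * x) ^ (-(1 / 2) : ℝ) * (1 - x) ^ (p + 1 - 1 / 2))
          - (p + 1/2) * (1 + z ^ 2) *
            ((1 + z ^ 2 * x) ^ (-(1 / 2) : ℝ) * (1 - x) ^ (p - 1 / 2))) x := by
    intro x hx
    have hu : (0:ℝ) < 1 + z ^ 2 * x := by nlinarith [hx.1.le, sq_nonneg z]
    have hs : (0:ℝ) < 1 - x := by linarith [hx.2]
    have h1 : HasDerivAt (fun x : ℝ => (1 + z ^ 2 * x) ^ ((1/2) : ℝ))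
        (z ^ 2 * (1/2) * (1 + z ^ 2 * x) ^ ((1/2:ℝ) - 1)) x := by
      have hb : HasDerivAt (fun x : ℝ => 1 + z ^ 2 * x) (z ^ 2) x := by
        simpa using ((hasDerivAt_id x).const_mul (z ^ 2)).const_add 1
      exact hb.rpow_const (Or.inl hu.ne')
    have h2 : HasDerivAt (fun x : ℝ => (1 - x) ^ (p + 1/2))
        (-1 * (p + 1/2) * (1 - x) ^ (p + 1/2 - 1)) x :=
      ((hasDerivAt_id x).const_sub 1).rpow_const (Or.inl hs.ne')
    refine (h1.mul h2).congr_deriv ?_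
    have e1 : (1 + z ^ 2 * x) ^ ((1/2):ℝ)
        = (1 + z ^ 2 * x) ^ (-(1/2):ℝ) * (1 + z ^ 2 * x) := aux_pow hu.ne' (by norm_num)
    have e2 : (1 - x) ^ (p + 1/2) = (1 - x) ^ (p - 1/2) * (1 - x) := aux_pow hs.ne' (by ring)
    have e2' : (1 - x) ^ (p + 1 - 1/2) = (1 - x) ^ (p - 1/2) * (1 - x) := aux_pow hs.ne' (by ring)
    have e3 : (1 + z ^ 2 * x) ^ ((1/2:ℝ) - 1) = (1 + z ^ 2 * x) ^ (-(1/2):ℝ) := by norm_num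
    have e4 : (1 - x) ^ (p + 1/2 - 1) = (1 - x) ^ (p - 1/2) := by norm_num [show p + 1/2 - 1 = p - 1/2 by ring]
    rw [e1, e2, e2', e3, e4]; ring
  have key := intervalIntegral.integral_eq_sub_of_hasDerivAt_of_le zero_le_one hcont hderiv
      ((hi1.const_mul (z ^ 2 * (p+1))).sub (hi2.const_mul ((p + 1/2) * (1 + z ^ 2))))
  rw [intervalIntegral.integral_sub (hi1.const_mul _) (hi2.const_mul _),
    intervalIntegral.integral_const_mul, intervalIntegral.integral_const_mul] at key
  rw [key]
  norm_num [Real.zero_rpow (show p + 1/2 ≠ 0 by positivity), Real.one_rpow]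

lemma beta_symm (p : ℝ) :
    eulerBeta p (3/2) = ∫ t in (0:ℝ)..1, t ^ ((1/2):ℝ) * (1-t) ^ (p-1) := by
  unfold eulerBeta
  have h := intervalIntegral.integral_comp_sub_left (a := (0:ℝ)) (b := 1)
    (fun t : ℝ => t ^ ((1/2):ℝ) * (1-t) ^ (p-1)) 1
  norm_num at h
  rw [← h]
  apply intervalIntegral.integral_congr
  intro x _
  simp only [sub_sub_cancel]
  rw [show (3/2 - 1 : ℝ) = 1/2 by norm_num]
  ring

theorem stmt_5 (p : ℝ) (hp : 0 < p) (z : ℝ) :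
    z ^ 2 * (1 + p) * edgeI z (p + 1) =
      p * (1 + z ^ 2) * edgeI z p - p * eulerBeta p (3 / 2) := by
  have u1 : eulerBeta (1/2) (p+1) = ∫ t in (0:ℝ)..1, t ^ (-(1/2):ℝ) * (1-t) ^ p := by
    unfold eulerBeta; norm_num
  have u2 : eulerBeta (1/2) p = ∫ t in (0:ℝ)..1, t ^ (-(1/2):ℝ) * (1-t) ^ (p-1) := by
    unfold eulerBeta; norm_num
  have R1 : (p + 1/2) * eulerBeta (1/2) (p+1) - p * eulerBeta (1/2) p = 0 := by
    rw [u1, u2]; exact beta_rec1 p hp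
  have R2 : eulerBeta (1/2) (p+1) - 2 * p * eulerBeta p (3/2) = 0 := by
    rw [u1, beta_symm]; exact beta_rec2 p hp
  have R3 := main_rec p hp z
  simp only [edgeI]
  linear_combination (eulerBeta (1/2) (p+1) / 2) * R3
    + ((1 + z ^ 2) * (∫ x in (0:ℝ)..1, (1 + z ^ 2 * x) ^ (-(1 / 2) : ℝ) * (1 - x) ^ (p - 1 / 2)) / 2) * R1
    - (1/2) * R2
end

section
/- For every real σ > 1, one has −π/2 < (1/√(2σ−1))·(1 − (3σ−1)/(σ(σ+1) + (σ−1))) − arctan(√(2σ−1)/(σ−1)) < 1/√(2σ−1) < 1. (This expresses that the Bessel phase function η_1 satisfies −π/2 < ∂η_1/∂ν(σ−1, σ) < 1.) -/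
open Real

theorem stmt_14 (σ : ℝ) (hσ : 1 < σ) :
    -(Real.pi / 2) <
        (1 / Real.sqrt (2 * σ - 1)) *
            (1 - (3 * σ - 1) / (σ * (σ + 1) + (σ - 1))) -
          Real.arctan (Real.sqrt (2 * σ - 1) / (σ - 1)) ∧
      (1 / Real.sqrt (2 * σ - 1)) *
            (1 - (3 * σ - 1) / (σ * (σ + 1) + (σ - 1))) -
          Real.arctan (Real.sqrt (2 * σ - 1) / (σ - 1)) <
        1 / Real.sqrt (2 * σ - 1) ∧
      1 / Real.sqrt (2 * σ - 1) < 1 := by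
  have h1 : (1:ℝ) < 2 * σ - 1 := by linarith
  have hs : 1 < Real.sqrt (2 * σ - 1) := by
    have := Real.lt_sqrt (x := 1) (y := 2 * σ - 1) (by norm_num)
    rw [this]; nlinarith
  have hs0 : 0 < Real.sqrt (2 * σ - 1) := by linarith
  have hden : 0 < σ * (σ + 1) + (σ - 1) := by nlinarith
  have ht0 : 0 < (3 * σ - 1) / (σ * (σ + 1) + (σ - 1)) := div_pos (by linarith) hden
  have ht1 : (3 * σ - 1) / (σ * (σ + 1) + (σ - 1)) ≤ 1 := by
    rw [div_le_one hden]; nlinarith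
  have hap : 0 < Real.arctan (Real.sqrt (2 * σ - 1) / (σ - 1)) :=
    by simpa using Real.arctan_strictMono (div_pos hs0 (show (0:ℝ) < σ - 1 by linarith))
  have hal : Real.arctan (Real.sqrt (2 * σ - 1) / (σ - 1)) < Real.pi / 2 :=
    Real.arctan_lt_pi_div_two _
  have hinv : 0 < 1 / Real.sqrt (2 * σ - 1) := by positivity
  have hfirst : 0 ≤ (1 / Real.sqrt (2 * σ - 1)) *
      (1 - (3 * σ - 1) / (σ * (σ + 1) + (σ - 1))) :=
    mul_nonneg hinv.le (by linarith)
  have hsecond : (1 / Real.sqrt (2 * σ - 1)) *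
      (1 - (3 * σ - 1) / (σ * (σ + 1) + (σ - 1))) < (1 / Real.sqrt (2 * σ - 1)) * 1 :=
    mul_lt_mul_of_pos_left (by linarith) hinv
  refine ⟨by linarith, by linarith, (div_lt_one hs0).mpr hs⟩
end

section
/- Let L, R > 0. For every real σ > 2R/L and every z with 0 ≤ z ≤ 1/√2, one has (1 − z²)^{−3/2} · ( L/R − σ^{−1}((2 + z² − 2z⁴)/(2 − z²)² − L/(2R)) ) > (15/32)(L/R). (This expresses that the phase function η_2 satisfies ∂²η_2/∂ν²(zσ, σ) < −σ^{−1}(15/32)(L/R), i.e. η_2(·, σ) is strongly concave on [0, σ/√2].) -/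
open Real

theorem stmt_15 (L R : ℝ) (hL : 0 < L) (hR : 0 < R) (σ : ℝ) (hσ : 2 * R / L < σ)
    (z : ℝ) (hz0 : 0 ≤ z) (hz1 : z ≤ 1 / Real.sqrt 2) :
    (1 - z ^ 2) ^ (-(3 : ℝ) / 2) *
        (L / R - σ⁻¹ * ((2 + z ^ 2 - 2 * z ^ 4) / (2 - z ^ 2) ^ 2 - L / (2 * R))) >
      (15 / 32) * (L / R) := by
  have ht : z ^ 2 ≤ 1 / 2 := by
    have h := pow_le_pow_left₀ hz0 hz1 2
    have h2 : (1 / Real.sqrt 2) ^ 2 = 1 / 2 := by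
      rw [div_pow, one_pow, sq_sqrt]; norm_num
    linarith [h.trans_eq h2]
  have hσ0 : 0 < σ := lt_trans (div_pos (by linarith) hL) hσ
  have hinv0 : 0 < σ⁻¹ := inv_pos.2 hσ0
  have hinv : σ⁻¹ < L / (2 * R) := by
    have h1 : σ⁻¹ < (2 * R / L)⁻¹ :=
      inv_strictAnti₀ (div_pos (by linarith) hL) hσ
    have h2 : (2 * R / L)⁻¹ = L / (2 * R) := by
      field_simp
    linarith [h1.trans_eq h2]
  have hpos2 : (0:ℝ) < 2 - z ^ 2 := by linarith
  have hf : (2 + z ^ 2 - 2 * z ^ 4) / (2 - z ^ 2) ^ 2 ≤ 8 / 9 := by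
    rw [div_le_iff₀ (by positivity)]
    nlinarith [sq_nonneg z, sq_nonneg (z ^ 2 - 1/2), mul_nonneg (sub_nonneg.2 ht) (sub_nonneg.2 ht)]
  have hLR : 0 < L / (2 * R) := div_pos hL (by linarith)
  have hhalf : L / (2 * R) = (1 / 2) * (L / R) := by ring
  have hinner : (5 / 9) * (L / R) ≤
      L / R - σ⁻¹ * ((2 + z ^ 2 - 2 * z ^ 4) / (2 - z ^ 2) ^ 2 - L / (2 * R)) := by
    nlinarith [mul_nonneg hinv0.le (sub_nonneg.2 hf),
      mul_nonneg hinv0.le hLR.le, div_pos hL hR]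
  have hrpow : 1 ≤ (1 - z ^ 2) ^ (-(3 : ℝ) / 2) :=
    Real.one_le_rpow_of_pos_of_le_one_of_nonpos (by linarith) (by nlinarith [sq_nonneg z])
      (by norm_num)
  have hin0 : 0 ≤ L / R - σ⁻¹ * ((2 + z ^ 2 - 2 * z ^ 4) / (2 - z ^ 2) ^ 2 - L / (2 * R)) := by
    nlinarith [div_pos hL hR, hinner]
  have hLRpos : 0 < L / R := div_pos hL hR
  nlinarith [mul_le_mul_of_nonneg_right hrpow hin0]
end

section
/- Let L, R > 0. For every real σ > 2R/L and every z with 0 ≤ z ≤ 1/√2, one has 0 ≤ (z/√(1−z²)) · ( L/R − σ^{−1}(1/(2 − z²) − L/(2R)) ) < L/R + (L/(2R))². (This expresses the bound −L/R − (L/(2R))² < ∂η_2/∂ν(zσ, σ) ≤ 0 on the range 0 ≤ z ≤ 1/√2.) -/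
open Real

theorem stmt_16 (L R : ℝ) (hL : 0 < L) (hR : 0 < R) (σ : ℝ) (hσ : 2 * R / L < σ)
    (z : ℝ) (hz0 : 0 ≤ z) (hz1 : z ≤ 1 / Real.sqrt 2) :
    0 ≤ (z / Real.sqrt (1 - z ^ 2)) *
          (L / R - σ⁻¹ * (1 / (2 - z ^ 2) - L / (2 * R))) ∧
      (z / Real.sqrt (1 - z ^ 2)) *
          (L / R - σ⁻¹ * (1 / (2 - z ^ 2) - L / (2 * R))) <
        L / R + (L / (2 * R)) ^ 2 := by
  have hs2 : (0:ℝ) < Real.sqrt 2 := by positivity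
  have hz2 : z ^ 2 ≤ 1 / 2 := by
    have h := mul_le_mul hz1 hz1 hz0 (by positivity)
    calc z ^ 2 = z * z := sq z
      _ ≤ (1 / Real.sqrt 2) * (1 / Real.sqrt 2) := h
      _ = 1 / 2 := by
          rw [div_mul_div_comm, one_mul, Real.mul_self_sqrt (by norm_num)]
  have hsq : 0 < Real.sqrt (1 - z ^ 2) := Real.sqrt_pos.mpr (by linarith)
  have ht0 : 0 ≤ z / Real.sqrt (1 - z ^ 2) := by positivity
  have ht1 : z / Real.sqrt (1 - z ^ 2) ≤ 1 := by
    rw [div_le_one hsq]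
    have hzz : z = Real.sqrt (z ^ 2) := (Real.sqrt_sq hz0).symm
    rw [hzz]
    exact Real.sqrt_le_sqrt (by nlinarith [Real.sq_sqrt (show (0:ℝ) ≤ z^2 by positivity)])
  have hm : 0 < L / (2 * R) := by positivity
  have hσ0 : 0 < σ := lt_trans (by positivity) hσ
  have ha0 : 0 < σ⁻¹ := by positivity
  have ham : σ⁻¹ < L / (2 * R) := by
    rw [← one_div, div_lt_div_iff₀ hσ0 (by positivity)]
    have h := (div_lt_iff₀ hL).mp hσ
    nlinarith
  have hc1 : (1:ℝ) / 2 ≤ 1 / (2 - z ^ 2) := by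
    rw [div_le_div_iff₀ (by norm_num) (by nlinarith)]
    nlinarith
  have hc2 : 1 / (2 - z ^ 2) ≤ 2 / 3 := by
    rw [div_le_div_iff₀ (by nlinarith) (by norm_num)]
    nlinarith
  set a := σ⁻¹ with hadef
  set m := L / (2 * R) with hmdef
  set c := 1 / (2 - z ^ 2) with hcdef
  have hc0 : 0 < c := lt_of_lt_of_le (by norm_num) hc1
  have hLR : L / R = 2 * m := by rw [hmdef]; field_simp
  have hE0 : 0 ≤ L / R - a * (c - m) := by
    have h1 : a * c ≤ m * (2 / 3) := mul_le_mul ham.le hc2 hc0.le hm.le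
    have h2 : 0 ≤ a * m := by positivity
    nlinarith
  have hEu : L / R - a * (c - m) < L / R + m ^ 2 := by
    have h1 : a * m < m * m := by nlinarith
    have h2 : 0 ≤ a * c := mul_nonneg ha0.le hc0.le
    nlinarith
  constructor
  · exact mul_nonneg ht0 hE0
  · calc z / Real.sqrt (1 - z ^ 2) * (L / R - a * (c - m))
        ≤ 1 * (L / R - a * (c - m)) := mul_le_mul_of_nonneg_right ht1 hE0
      _ = L / R - a * (c - m) := one_mul _
      _ < L / R + m ^ 2 := hEu
end

section
/- Let k be an integer, σ a real number with k < σ, and let f : [k, σ] → ℝ be continuous and strictly decreasing, with inverse g : [f(σ), f(k)] → [k, σ]. Then Σ_{j ∈ ℤ, k < j ≤ σ} ⌊f(j)⌋ = Σ_{m ∈ ℤ, f(σ) < m ≤ f(k)} ⌊g(m)⌋ + ⌊f(σ)⌋(⌊σ⌋ − k) − k(⌊f(k)⌋ − ⌊f(σ)⌋). -/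
open Finset

lemma sum_indicator_Ioc (a b c : ℤ) (hab : a ≤ b) (hbc : b ≤ c) :
    (∑ m ∈ Finset.Ioc a c, if m ≤ b then (1 : ℤ) else 0) = b - a := by
  have hfil : (Finset.Ioc a c).filter (fun m => m ≤ b) = Finset.Ioc a b := by
    ext x; simp only [Finset.mem_filter, Finset.mem_Ioc]; omega
  rw [← Finset.sum_filter, hfil, Finset.sum_const, Int.card_Ioc, nsmul_eq_mul, mul_one]
  omega

theorem stmt_17 (k : ℤ) (σ : ℝ) (hkσ : (k : ℝ) < σ) (f g : ℝ → ℝ)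
    (hf_cont : ContinuousOn f (Set.Icc (k : ℝ) σ))
    (hf_anti : StrictAntiOn f (Set.Icc (k : ℝ) σ))
    (hg_left : ∀ x ∈ Set.Icc (k : ℝ) σ, g (f x) = x)
    (hg_right : ∀ y ∈ Set.Icc (f σ) (f (k : ℝ)),
      g y ∈ Set.Icc (k : ℝ) σ ∧ f (g y) = y) :
    ∑ j ∈ Finset.Ioc k ⌊σ⌋, ⌊f (j : ℝ)⌋ =
      (∑ m ∈ Finset.Ioc ⌊f σ⌋ ⌊f (k : ℝ)⌋, ⌊g (m : ℝ)⌋) +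
        ⌊f σ⌋ * (⌊σ⌋ - k) - k * (⌊f (k : ℝ)⌋ - ⌊f σ⌋) := by
  have hkI : (k : ℝ) ∈ Set.Icc (k : ℝ) σ := ⟨le_refl _, hkσ.le⟩
  have hσI : σ ∈ Set.Icc (k : ℝ) σ := ⟨hkσ.le, le_refl _⟩
  have hfσk : f σ < f (k : ℝ) := hf_anti hkI hσI hkσ
  have hkfl : k ≤ ⌊σ⌋ := Int.le_floor.2 hkσ.le
  have hAnti : AntitoneOn f (Set.Icc (k : ℝ) σ) := hf_anti.antitoneOn
  -- membership of integer points
  have hjI : ∀ j ∈ Finset.Ioc k ⌊σ⌋, (j : ℝ) ∈ Set.Icc (k : ℝ) σ := by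
    intro j hj
    rw [Finset.mem_Ioc] at hj
    exact ⟨by exact_mod_cast hj.1.le, le_trans (by exact_mod_cast hj.2) (Int.floor_le σ)⟩
  have hmI : ∀ m ∈ Finset.Ioc ⌊f σ⌋ ⌊f (k : ℝ)⌋, (m : ℝ) ∈ Set.Icc (f σ) (f (k : ℝ)) := by
    intro m hm
    rw [Finset.mem_Ioc] at hm
    exact ⟨(Int.floor_lt.1 hm.1).le, Int.le_floor.1 hm.2⟩
  -- key equivalence
  have key : ∀ j ∈ Finset.Ioc k ⌊σ⌋, ∀ m ∈ Finset.Ioc ⌊f σ⌋ ⌊f (k : ℝ)⌋,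
      (m ≤ ⌊f (j : ℝ)⌋ ↔ j ≤ ⌊g (m : ℝ)⌋) := by
    intro j hj m hm
    have hjI' := hjI j hj
    have hmI' := hmI m hm
    obtain ⟨hgI, hfg⟩ := hg_right (m : ℝ) hmI'
    rw [Int.le_floor, Int.le_floor]
    constructor
    · intro hmf
      by_contra hlt
      push_neg at hlt
      have : f (j : ℝ) < f (g (m : ℝ)) := hf_anti hgI hjI' hlt
      rw [hfg] at this
      exact absurd hmf (not_le.2 this)
    · intro hjg
      have : f (g (m : ℝ)) ≤ f (j : ℝ) := hAnti hjI' hgI hjg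
      rwa [hfg] at this
  -- floor bounds
  have hfjlb : ∀ j ∈ Finset.Ioc k ⌊σ⌋, ⌊f σ⌋ ≤ ⌊f (j : ℝ)⌋ := by
    intro j hj
    exact Int.floor_le_floor (hAnti (hjI j hj) hσI (hjI j hj).2)
  have hfjub : ∀ j ∈ Finset.Ioc k ⌊σ⌋, ⌊f (j : ℝ)⌋ ≤ ⌊f (k : ℝ)⌋ := by
    intro j hj
    exact Int.floor_le_floor (hAnti hkI (hjI j hj) (hjI j hj).1)
  have hgmlb : ∀ m ∈ Finset.Ioc ⌊f σ⌋ ⌊f (k : ℝ)⌋, k ≤ ⌊g (m : ℝ)⌋ := by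
    intro m hm
    exact Int.le_floor.2 (hg_right _ (hmI m hm)).1.1
  have hgmub : ∀ m ∈ Finset.Ioc ⌊f σ⌋ ⌊f (k : ℝ)⌋, ⌊g (m : ℝ)⌋ ≤ ⌊σ⌋ := by
    intro m hm
    exact Int.le_floor.2 (le_trans (Int.floor_le _) (hg_right _ (hmI m hm)).1.2)
  -- main double counting identity
  have main : ∑ j ∈ Finset.Ioc k ⌊σ⌋, (⌊f (j : ℝ)⌋ - ⌊f σ⌋)
      = ∑ m ∈ Finset.Ioc ⌊f σ⌋ ⌊f (k : ℝ)⌋, (⌊g (m : ℝ)⌋ - k) := by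
    have L : ∀ j ∈ Finset.Ioc k ⌊σ⌋, ⌊f (j : ℝ)⌋ - ⌊f σ⌋ =
        ∑ m ∈ Finset.Ioc ⌊f σ⌋ ⌊f (k : ℝ)⌋, if m ≤ ⌊f (j : ℝ)⌋ then (1 : ℤ) else 0 := by
      intro j hj
      rw [sum_indicator_Ioc _ _ _ (hfjlb j hj) (hfjub j hj)]
    have R : ∀ m ∈ Finset.Ioc ⌊f σ⌋ ⌊f (k : ℝ)⌋, ⌊g (m : ℝ)⌋ - k =
        ∑ j ∈ Finset.Ioc k ⌊σ⌋, if j ≤ ⌊g (m : ℝ)⌋ then (1 : ℤ) else 0 := by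
      intro m hm
      rw [sum_indicator_Ioc _ _ _ (hgmlb m hm) (hgmub m hm)]
    rw [Finset.sum_congr rfl L, Finset.sum_congr rfl R, Finset.sum_comm]
    refine Finset.sum_congr rfl fun m hm => Finset.sum_congr rfl fun j hj => ?_
    exact if_congr (key j hj m hm) rfl rfl
  -- finishing arithmetic
  have c1 : (((Finset.Ioc k ⌊σ⌋).card : ℤ)) = ⌊σ⌋ - k := by rw [Int.card_Ioc]; omega
  have c2 : (((Finset.Ioc ⌊f σ⌋ ⌊f (k : ℝ)⌋).card : ℤ)) = ⌊f (k : ℝ)⌋ - ⌊f σ⌋ := by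
    have := Int.floor_le_floor hfσk.le
    rw [Int.card_Ioc]; omega
  have e1 : ∑ j ∈ Finset.Ioc k ⌊σ⌋, ⌊f (j : ℝ)⌋
      = (∑ j ∈ Finset.Ioc k ⌊σ⌋, (⌊f (j : ℝ)⌋ - ⌊f σ⌋)) + ⌊f σ⌋ * (⌊σ⌋ - k) := by
    rw [Finset.sum_sub_distrib, Finset.sum_const, ← c1]
    ring
  have e2 : ∑ m ∈ Finset.Ioc ⌊f σ⌋ ⌊f (k : ℝ)⌋, ⌊g (m : ℝ)⌋
      = (∑ m ∈ Finset.Ioc ⌊f σ⌋ ⌊f (k : ℝ)⌋, (⌊g (m : ℝ)⌋ - k)) + k * (⌊f (k : ℝ)⌋ - ⌊f σ⌋) := by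
    rw [Finset.sum_sub_distrib, Finset.sum_const, ← c2]
    ring
  rw [e1, e2, main]
  ring
end
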